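/- Let D be a chord diagram on n circles in which interior chords join a circle to itself and exterior chords join distinct circles, and suppose each circle meets an even number of exterior chord endpoints (so the underlying virtual diagram admits an alternating orientation). Assign to each chord endpoint a sign alternating around each circle; classify each chord (crossing) as a sink if the induced orientations converge at it, a source if they diverge, and a saddle otherwise. Then the number of sinks equals the number of sources. -/

import Mathlib

/-- Chord diagrams and sinks = sources. The diagram has `n` circles; circle `c` carries
`N c > 0` chord endpoints, cyclically indexed by `ZMod (N c)`. The chords are encoded by
a fixed-point-free involution `m` on the set of endpoints (an interior chord joins a
circle to itself, an exterior chord joins distinct circles); each circle meets an even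
number of exterior chord endpoints. Each endpoint carries a sign `s` which alternates
around each circle (the alternating orientation). A chord (crossing) is a sink if the
orientations converge at it (both endpoint signs `true`), a source if they diverge (both
`false`), and a saddle otherwise. Counting endpoints (each chord contributes its two
endpoints), the number of sinks equals the number of sources. -/
theorem stmt18 {n : ℕ} (N : Fin n → ℕ) (hN : ∀ c, 0 < N c)
    (m : (Σ c : Fin n, ZMod (N c)) → (Σ c : Fin n, ZMod (N c)))
    (hm_inv : ∀ e, m (m e) = e) (hm_ne : ∀ e, m e ≠ e)
    (hext_even : ∀ c : Fin n, Even (Nat.card {i : ZMod (N c) // (m ⟨c, i⟩).1 ≠ c}))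
    (s : (Σ c : Fin n, ZMod (N c)) → Bool)
    (halt : ∀ (c : Fin n) (i : ZMod (N c)), s ⟨c, i + 1⟩ = !s ⟨c, i⟩) :
    Nat.card {e : Σ c : Fin n, ZMod (N c) // s e = true ∧ s (m e) = true} =
      Nat.card {e : Σ c : Fin n, ZMod (N c) // s e = false ∧ s (m e) = false} := by
  haveI : ∀ c : Fin n, NeZero (N c) := fun c => ⟨(hN c).ne'⟩
  rw [Nat.card_eq_fintype_card, Nat.card_eq_fintype_card, Fintype.card_subtype,
    Fintype.card_subtype]
  have heta : ∀ e : (Σ c : Fin n, ZMod (N c)), (⟨e.1, e.2⟩ : Σ c : Fin n, ZMod (N c)) = e :=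
    fun e => rfl
  -- shift map: bijection between true endpoints and false endpoints
  have hT : (Finset.univ.filter (fun e : Σ c : Fin n, ZMod (N c) => s e = true)).card =
      (Finset.univ.filter (fun e : Σ c : Fin n, ZMod (N c) => s e = false)).card := by
    apply Finset.card_bij' (fun e _ => (⟨e.1, e.2 + 1⟩ : Σ c : Fin n, ZMod (N c)))
      (fun e _ => (⟨e.1, e.2 - 1⟩ : Σ c : Fin n, ZMod (N c)))
    · intro e he
      simp only [Finset.mem_filter, Finset.mem_univ, true_and] at he ⊢
      rw [halt, heta, he]; rfl
    · intro e he
      simp only [Finset.mem_filter, Finset.mem_univ, true_and] at he ⊢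
      have h2 := halt e.1 (e.2 - 1)
      rw [sub_add_cancel, heta, he] at h2
      exact (Bool.not_eq_false' _).mp h2.symm
    · intro e _
      simp only [add_sub_cancel_right]
    · intro e _
      simp only [sub_add_cancel]
  -- m gives bijection between TF and FT
  have hTF : (Finset.univ.filter
        (fun e : Σ c : Fin n, ZMod (N c) => s e = true ∧ s (m e) = false)).card =
      (Finset.univ.filter
        (fun e : Σ c : Fin n, ZMod (N c) => s e = false ∧ s (m e) = true)).card := by
    apply Finset.card_bij' (fun e _ => m e) (fun e _ => m e)
    · intro e he
      simp only [Finset.mem_filter, Finset.mem_univ, true_and, hm_inv] at he ⊢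
      exact ⟨he.2, he.1⟩
    · intro e he
      simp only [Finset.mem_filter, Finset.mem_univ, true_and, hm_inv] at he ⊢
      exact ⟨he.2, he.1⟩
    · intro e _; exact hm_inv e
    · intro e _; exact hm_inv e
  -- splitting
  have split : ∀ b : Bool,
      (Finset.univ.filter (fun e : Σ c : Fin n, ZMod (N c) => s e = b ∧ s (m e) = b)).card +
      (Finset.univ.filter (fun e : Σ c : Fin n, ZMod (N c) => s e = b ∧ s (m e) = !b)).card =
      (Finset.univ.filter (fun e : Σ c : Fin n, ZMod (N c) => s e = b)).card := by
    intro b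
    have h3 := Finset.card_filter_add_card_filter_not
      (s := Finset.univ.filter (fun e : Σ c : Fin n, ZMod (N c) => s e = b))
      (p := fun e : Σ c : Fin n, ZMod (N c) => s (m e) = b)
    rw [Finset.filter_filter, Finset.filter_filter] at h3
    convert h3 using 3
    ext e
    cases b <;> simp
  have s1 := split true
  have s2 := split false
  simp only [Bool.not_true, Bool.not_false] at s1 s2
  omega
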